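/- Let k be an even integer and let s, w ∈ ℂ satisfy 2 < Re(s) < k−2, Re(w) < Re(s)−1 and Re(w) < k−1−Re(s). Then the function z ↦ 𝓔_{s,k−s}(z,w) is a cusp form of weight k for SL₂(ℤ): it is holomorphic on ℍ, satisfies 𝓔_{s,k−s}(γz, w) = j(γ,z)^k · 𝓔_{s,k−s}(z,w) for every γ ∈ Γ and z ∈ ℍ, and 𝓔_{s,k−s}(z,w) → 0 as Im(z) → ∞, uniformly in Re(z). -/

import Mathlib

open Complex Matrix MatrixGroups

noncomputable section

/-- `Γ = SL₂(ℤ)`. -/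
abbrev SL2Z := Matrix.SpecialLinearGroup (Fin 2) ℤ

/-- `j(γ, z) = c z + d`. -/
def jc (g : SL2Z) (z : ℂ) : ℂ := (g.1 1 0 : ℂ) * z + (g.1 1 1 : ℂ)

/-- `c_γ`, the lower-left entry of `γ`. -/
def cEnt (g : SL2Z) : ℤ := g.1 1 0

/-- The Möbius action of `SL₂(ℤ)` on the upper half-plane, written on `ℂ`. -/
def moeb (g : SL2Z) (z : ℂ) : ℂ := ((g.1 0 0 : ℂ) * z + (g.1 0 1 : ℂ)) / jc g z

/-- The subgroup `B = {(1 n; 0 1) : n ∈ ℤ}`, i.e. the powers of `T = (1 1; 0 1)`. -/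
def Bsub : Subgroup SL2Z := Subgroup.zpowers ModularGroup.T

/-- The set of left cosets `Bγ`, i.e. `B∖Γ`. -/
abbrev BCoset := Quotient (QuotientGroup.rightRel Bsub)

/-- The summand of the double Eisenstein series `𝓔_{s,k-s}(z,w)`, evaluated on a pair of
cosets `(Bγ, Bδ)` via chosen representatives (it is well defined on such cosets), and
set to `0` unless `c_{γδ⁻¹} > 0`. All complex powers are principal-branch powers. -/
def dblSummand (k : ℤ) (s w : ℂ) (z : ℂ) (p : BCoset × BCoset) : ℂ :=
  if 0 < cEnt (p.1.out * p.2.out⁻¹) then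
    ((cEnt (p.1.out * p.2.out⁻¹) : ℂ)) ^ (w - 1) *
      (jc p.1.out z / jc p.2.out z) ^ (-s) * (jc p.2.out z) ^ (-(k : ℂ))
  else 0

/-- The double Eisenstein series `𝓔_{s,k-s}(z,w)`. -/
def dblE (k : ℤ) (s w : ℂ) (z : ℂ) : ℂ := ∑' p : BCoset × BCoset, dblSummand k s w z p

namespace DblAux

open Real UpperHalfPlane

/-! ### Bottom rows of cosets -/

lemma row_eq_of_rel {x y : SL2Z} (h : QuotientGroup.rightRel Bsub x y) : x.1 1 = y.1 1 := by
  have h' : y * x⁻¹ ∈ Bsub := QuotientGroup.rightRel_apply.mp h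
  obtain ⟨n, hn⟩ := Subgroup.mem_zpowers_iff.mp h'
  have hy : y = ModularGroup.T ^ n * x := by rw [hn]; group
  have hcoe : y.1 = (ModularGroup.T ^ n).1 * x.1 := by rw [hy]; rfl
  funext j
  have := congrFun (congrFun hcoe 1) j
  rw [ModularGroup.coe_T_zpow] at this
  simp [Matrix.mul_apply, Fin.sum_univ_two] at this
  simpa using this.symm

lemma rel_of_row_eq {x y : SL2Z} (h : x.1 1 = y.1 1) : QuotientGroup.rightRel Bsub x y := by
  rw [QuotientGroup.rightRel_apply]
  set m := y * x⁻¹ with hm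
  have hx10 : x.1 1 0 = y.1 1 0 := by rw [h]
  have hx11 : x.1 1 1 = y.1 1 1 := by rw [h]
  have hinv : (x⁻¹).1 = ![![x.1 1 1, -x.1 0 1], ![-x.1 1 0, x.1 0 0]] := by
    rw [Matrix.SpecialLinearGroup.SL2_inv_expl]
  have hdx : x.1 0 0 * x.1 1 1 - x.1 0 1 * x.1 1 0 = 1 := by
    have := x.2; rwa [Matrix.det_fin_two] at this
  have hm' : m.1 = y.1 * (x⁻¹).1 := rfl
  have h10 : m.1 1 0 = 0 := by
    rw [hm', hinv]; erw [Matrix.mul_apply, Fin.sum_univ_two]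
    simp [← hx10, ← hx11]; ring
  have h11 : m.1 1 1 = 1 := by
    rw [hm', hinv]; erw [Matrix.mul_apply, Fin.sum_univ_two]
    simp [← hx10, ← hx11]; linarith [hdx]
  have hdm : m.1 0 0 * m.1 1 1 - m.1 0 1 * m.1 1 0 = 1 := by
    have := m.2; rwa [Matrix.det_fin_two] at this
  have h00 : m.1 0 0 = 1 := by rw [h10, h11] at hdm; linarith
  have hTm : m = ModularGroup.T ^ (m.1 0 1) := by
    ext i j
    rw [ModularGroup.coe_T_zpow]
    fin_cases i <;> fin_cases j <;> simp [h00, h10, h11]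
  show m ∈ Subgroup.zpowers ModularGroup.T
  rw [Subgroup.mem_zpowers_iff]
  exact ⟨m.1 0 1, hTm.symm⟩

/-- bottom row of (a representative of) a coset -/
def bRow (p : BCoset) : Fin 2 → ℤ := p.out.1 1

lemma bRow_mk (γ : SL2Z) : bRow (Quotient.mk _ γ) = γ.1 1 :=
  row_eq_of_rel (Quotient.exact (Quotient.out_eq _))

lemma bRow_injective : Function.Injective bRow := by
  intro p q h
  rw [← Quotient.out_eq p, ← Quotient.out_eq q]
  exact Quotient.sound (rel_of_row_eq h)

lemma bRow_ne_zero (p : BCoset) : bRow p ≠ 0 := by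
  intro h
  have hd := p.out.2
  rw [Matrix.det_fin_two] at hd
  have h0 : p.out.1 1 0 = 0 := by have := congrFun h 0; simpa [bRow] using this
  have h1 : p.out.1 1 1 = 0 := by have := congrFun h 1; simpa [bRow] using this
  rw [h0, h1] at hd; simp at hd

/-! ### Row-level summand -/

/-- `J v z = v 0 * z + v 1`. -/
def J (v : Fin 2 → ℤ) (z : ℂ) : ℂ := (v 0 : ℂ) * z + (v 1 : ℂ)

/-- `Cc v u = v₀u₁ - u₀v₁`. -/
def Cc (v u : Fin 2 → ℤ) : ℤ := v 0 * u 1 - u 0 * v 1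

/-- row-level summand of the double Eisenstein series -/
def term (k : ℤ) (s w : ℂ) (z : ℂ) (v u : Fin 2 → ℤ) : ℂ :=
  if 0 < Cc v u then
    ((Cc v u : ℂ)) ^ (w - 1) * (J v z / J u z) ^ (-s) * (J u z) ^ (-(k : ℂ))
  else 0

lemma jc_eq_J (g : SL2Z) (z : ℂ) : jc g z = J (g.1 1) z := rfl

lemma cEnt_mul_inv (γ δ : SL2Z) : cEnt (γ * δ⁻¹) = Cc (γ.1 1) (δ.1 1) := by
  have hinv : (δ⁻¹).1 = ![![δ.1 1 1, -δ.1 0 1], ![-δ.1 1 0, δ.1 0 0]] := by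
    rw [Matrix.SpecialLinearGroup.SL2_inv_expl]
  have hcoe : (γ * δ⁻¹).1 = γ.1 * (δ⁻¹).1 := rfl
  unfold cEnt Cc
  rw [hcoe, hinv]; erw [Matrix.mul_apply, Fin.sum_univ_two]
  simp; ring

lemma dblSummand_eq (k : ℤ) (s w : ℂ) (z : ℂ) (p : BCoset × BCoset) :
    dblSummand k s w z p = term k s w z (bRow p.1) (bRow p.2) := by
  unfold dblSummand term
  rw [cEnt_mul_inv]
  rfl

lemma J_im (v : Fin 2 → ℤ) (z : ℂ) : (J v z).im = (v 0 : ℝ) * z.im := by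
  simp [J]

lemma J_ne_zero {v : Fin 2 → ℤ} (hv : v ≠ 0) {z : ℂ} (hz : 0 < z.im) : J v z ≠ 0 := by
  intro h
  by_cases h0 : v 0 = 0
  · have h1 : v 1 ≠ 0 := by
      intro h1; apply hv; funext i; fin_cases i <;> simp [h0, h1]
    rw [J, h0] at h
    simp at h
    exact h1 (by exact_mod_cast h)
  · have := congrArg Complex.im h
    rw [J_im] at this
    simp at this
    rcases this with h' | h'
    · exact h0 (by exact_mod_cast h')
    · linarith

lemma mul_conj_im (v u : Fin 2 → ℤ) (z : ℂ) :
    (J v z * (starRingEnd ℂ) (J u z)).im = (Cc v u : ℝ) * z.im := by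
  simp [J, Cc]; ring

lemma Cc_le (v u : Fin 2 → ℤ) {z : ℂ} (hz : 0 < z.im) :
    (Cc v u : ℝ) * z.im ≤ ‖J v z‖ * ‖J u z‖ := by
  rw [← mul_conj_im]
  calc (J v z * (starRingEnd ℂ) (J u z)).im ≤ ‖J v z * (starRingEnd ℂ) (J u z)‖ :=
        Complex.im_le_norm _
    _ = ‖J v z‖ * ‖J u z‖ := by
        rw [norm_mul]; simp

/-! ### The fundamental norm bound -/

lemma term_bound (k : ℤ) (s w : ℂ) {z : ℂ} (hz : 0 < z.im) {v u : Fin 2 → ℤ}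
    (hv : v ≠ 0) (hu : u ≠ 0) {t : ℝ} (ht0 : 0 ≤ t) (htw : w.re - 1 ≤ t) :
    ‖term k s w z v u‖ ≤ Real.exp (π * |s.im|) * z.im ^ (-t) *
      ‖J v z‖ ^ (t - s.re) * ‖J u z‖ ^ (t - ((k : ℝ) - s.re)) := by
  set Av := ‖J v z‖ with hAv
  set Au := ‖J u z‖ with hAu
  have hAvp : 0 < Av := norm_pos_iff.mpr (J_ne_zero hv hz)
  have hAup : 0 < Au := norm_pos_iff.mpr (J_ne_zero hu hz)
  have hE : (0:ℝ) < Real.exp (π * |s.im|) := Real.exp_pos _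
  by_cases hC : 0 < Cc v u
  case neg =>
    rw [term, if_neg hC]
    simp only [norm_zero]
    positivity
  case pos =>
    have hC1 : (1:ℝ) ≤ (Cc v u : ℝ) := by exact_mod_cast hC
    have hCpos : (0:ℝ) < (Cc v u : ℝ) := by linarith
    rw [term, if_pos hC, norm_mul, norm_mul]
    have n1 : ‖((Cc v u : ℤ) : ℂ) ^ (w - 1)‖ = (Cc v u : ℝ) ^ (w.re - 1) := by
      have h : ((Cc v u : ℤ) : ℂ) = (((Cc v u : ℝ)) : ℂ) := by push_cast; ring
      rw [h, Complex.norm_cpow_eq_rpow_re_of_pos hCpos]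
      norm_num
    have n2 : ‖(J v z / J u z) ^ (-s)‖ ≤
        (Av / Au) ^ (-s.re) * Real.exp (π * |s.im|) := by
      refine (Complex.norm_cpow_le _ _).trans ?_
      rw [norm_div, ← hAv, ← hAu]
      have hre : (-s).re = -s.re := by simp
      have him : (-s).im = -s.im := by simp
      rw [hre, him, div_eq_mul_inv, ← Real.exp_neg]
      have hb : -(Complex.arg (J v z / J u z) * -s.im) ≤ π * |s.im| := by
        calc -(Complex.arg (J v z / J u z) * -s.im) ≤ |Complex.arg (J v z / J u z) * -s.im| :=
              neg_le_abs _
          _ = |Complex.arg (J v z / J u z)| * |s.im| := by rw [abs_mul, abs_neg]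
          _ ≤ π * |s.im| := by
              have := Complex.abs_arg_le_pi (J v z / J u z)
              gcongr
      exact mul_le_mul_of_nonneg_left (Real.exp_le_exp.mpr hb) (by positivity)
    have n3 : ‖(J u z) ^ (-(k : ℂ))‖ = Au ^ (-(k : ℝ)) := by
      rw [Complex.norm_cpow_of_ne_zero (J_ne_zero hu hz)]
      have him : (-(k:ℂ)).im = 0 := by simp
      have hre : (-(k:ℂ)).re = -(k:ℝ) := by simp
      rw [him, hre, mul_zero, Real.exp_zero, div_one, hAu]
    rw [n1, n3]
    have hCle : (Cc v u : ℝ) ≤ Av * Au / z.im := by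
      rw [le_div_iff₀ hz]; exact Cc_le v u hz
    have step : (Cc v u : ℝ) ^ (w.re - 1) ≤ (Av * Au / z.im) ^ t :=
      (Real.rpow_le_rpow_of_exponent_le hC1 htw).trans
        (Real.rpow_le_rpow hCpos.le hCle ht0)
    calc (Cc v u : ℝ) ^ (w.re - 1) * ‖(J v z / J u z) ^ (-s)‖ * Au ^ (-(k:ℝ))
        ≤ (Av * Au / z.im) ^ t * ((Av / Au) ^ (-s.re) * Real.exp (π * |s.im|)) * Au ^ (-(k:ℝ)) := by
          have h0 : (0:ℝ) ≤ ‖(J v z / J u z) ^ (-s)‖ := norm_nonneg _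
          have h1 : (0:ℝ) ≤ Au ^ (-(k:ℝ)) := Real.rpow_nonneg hAup.le _
          exact mul_le_mul (mul_le_mul step n2 h0 (Real.rpow_nonneg (by positivity) _)) le_rfl h1
            (by positivity)
      _ = Real.exp (π * |s.im|) * z.im ^ (-t) * Av ^ (t - s.re) * Au ^ (t - ((k:ℝ) - s.re)) := by
          have e1 : ((Av * Au) / z.im) ^ t = Av ^ t * Au ^ t * z.im ^ (-t) := by
            rw [Real.div_rpow (by positivity) hz.le, Real.mul_rpow hAvp.le hAup.le,
              Real.rpow_neg hz.le, div_eq_mul_inv]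
          have e2 : (Av / Au) ^ (-s.re) = Av ^ (-s.re) * Au ^ s.re := by
            rw [Real.div_rpow hAvp.le hAup.le, div_eq_mul_inv]
            congr 1
            rw [← Real.rpow_neg hAup.le, neg_neg]
          have e3 : Av ^ t * Av ^ (-s.re) = Av ^ (t - s.re) := by
            rw [← Real.rpow_add hAvp]; ring_nf
          have e4 : Au ^ t * Au ^ s.re * Au ^ (-(k:ℝ)) = Au ^ (t - ((k:ℝ) - s.re)) := by
            rw [← Real.rpow_add hAup, ← Real.rpow_add hAup]; ring_nf
          rw [e1, e2, ← e3, ← e4]; ring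

/-! ### Summability -/

/-- the full lattice sum `∑ ‖v‖^a`. -/
def Tn (a : ℝ) : ℝ := ∑' v : Fin 2 → ℤ, ‖v‖ ^ a

lemma summable_norm_rpow {a : ℝ} (ha : a < -2) :
    Summable (fun v : Fin 2 → ℤ => ‖v‖ ^ a) := by
  have := EisensteinSeries.summable_one_div_norm_rpow (k := -a) (by linarith)
  simpa [neg_neg] using this

lemma Tn_nonneg (a : ℝ) : 0 ≤ Tn a :=
  tsum_nonneg fun v => Real.rpow_nonneg (norm_nonneg _) _

lemma J_bound (ζ : ℍ) {a : ℝ} (ha : a ≤ 0) (v : Fin 2 → ℤ) :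
    ‖J v (ζ : ℂ)‖ ^ a ≤ EisensteinSeries.r ζ ^ a * ‖v‖ ^ a := by
  have := EisensteinSeries.summand_bound ζ (k := -a) (by linarith) v
  simpa [J, neg_neg] using this

lemma J_bound_strip {A B : ℝ} (hB : 0 < B) {ζ : ℍ} (hζ : ζ ∈ UpperHalfPlane.verticalStrip A B)
    {a : ℝ} (ha : a ≤ 0) (v : Fin 2 → ℤ) :
    ‖J v (ζ : ℂ)‖ ^ a ≤ EisensteinSeries.r ⟨⟨A, B⟩, hB⟩ ^ a * ‖v‖ ^ a := by
  have := EisensteinSeries.summand_bound_of_mem_verticalStrip (k := -a) (by linarith) v hB hζ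
  simpa [J, neg_neg] using this

lemma summable_J_row (z : ℂ) (hz : 0 < z.im) {a : ℝ} (ha : a < -2) :
    Summable (fun p : BCoset => ‖J (bRow p) z‖ ^ a) := by
  have base : Summable (fun v : Fin 2 → ℤ => ‖J v z‖ ^ a) := by
    refine Summable.of_nonneg_of_le (fun v => Real.rpow_nonneg (norm_nonneg _) _)
      (fun v => ?_) ((summable_norm_rpow ha).mul_left (EisensteinSeries.r ⟨z, hz⟩ ^ a))
    exact J_bound ⟨z, hz⟩ (by linarith) v
  exact base.comp_injective bRow_injective

lemma tsum_J_row_le (z : ℂ) (hz : 0 < z.im) {a : ℝ} (ha : a < -2) {c : ℝ}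
    (hb : ∀ v : Fin 2 → ℤ, ‖J v z‖ ^ a ≤ c * ‖v‖ ^ a) :
    ∑' p : BCoset, ‖J (bRow p) z‖ ^ a ≤ c * Tn a := by
  rw [Tn, ← tsum_mul_left]
  exact Summable.tsum_le_tsum_of_inj bRow bRow_injective
    (fun v _ => by
      have h0 : (0:ℝ) ≤ ‖J v z‖ ^ a := Real.rpow_nonneg (norm_nonneg _) _
      exact le_trans h0 (hb v))
    (fun p => hb (bRow p)) (summable_J_row z hz ha) ((summable_norm_rpow ha).mul_left c)

/-! ### Modularity pieces -/

/-- right multiplication of a row vector by `g` -/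
def rmul (v : Fin 2 → ℤ) (g : SL2Z) : Fin 2 → ℤ :=
  ![v 0 * g.1 0 0 + v 1 * g.1 1 0, v 0 * g.1 0 1 + v 1 * g.1 1 1]

lemma row_mul (γ g : SL2Z) : (γ * g).1 1 = rmul (γ.1 1) g := by
  have h : (γ * g).1 = γ.1 * g.1 := rfl
  funext j
  rw [h, Matrix.mul_apply, Fin.sum_univ_two]
  fin_cases j <;> simp [rmul]

lemma det_g (g : SL2Z) : g.1 0 0 * g.1 1 1 - g.1 0 1 * g.1 1 0 = 1 := by
  have := g.2; rwa [Matrix.det_fin_two] at this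

lemma Cc_rmul (v u : Fin 2 → ℤ) (g : SL2Z) : Cc (rmul v g) (rmul u g) = Cc v u := by
  have hd := det_g g
  simp only [Cc, rmul, Matrix.cons_val_zero, Matrix.cons_val_one, Matrix.head_cons]
  linear_combination (v 0 * u 1 - u 0 * v 1) * hd

lemma jc_ne_zero (g : SL2Z) {z : ℂ} (hz : 0 < z.im) : jc g z ≠ 0 := by
  rw [jc_eq_J]
  refine J_ne_zero (fun h => ?_) hz
  have hd := det_g g
  have h0 : g.1 1 0 = 0 := by have := congrFun h 0; simpa using this
  have h1 : g.1 1 1 = 0 := by have := congrFun h 1; simpa using this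
  rw [h0, h1] at hd; simp at hd

lemma J_cocycle (v : Fin 2 → ℤ) (g : SL2Z) {z : ℂ} (hz : 0 < z.im) :
    J v (moeb g z) = J (rmul v g) z / jc g z := by
  have hj := jc_ne_zero g hz
  rw [eq_div_iff hj]
  simp only [J, moeb, rmul, jc] at hj ⊢
  push_cast
  linear_combination ((v 0 : ℤ) : ℂ) * div_mul_cancel₀ (((g.1 0 0 : ℤ) : ℂ) * z + ((g.1 0 1 : ℤ) : ℂ)) hj

lemma cpow_neg_int (x : ℂ) (k : ℤ) : x ^ (-(k : ℂ)) = x ^ (-k : ℤ) := by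
  rw [← Complex.cpow_intCast x (-k)]
  norm_num

lemma term_transform (k : ℤ) (s w : ℂ) (g : SL2Z) {z : ℂ} (hz : 0 < z.im)
    {v u : Fin 2 → ℤ} (hv' : rmul v g ≠ 0) (hu' : rmul u g ≠ 0) :
    term k s w (moeb g z) v u = jc g z ^ k * term k s w z (rmul v g) (rmul u g) := by
  by_cases hC : 0 < Cc v u
  case neg =>
    rw [term, term, if_neg hC, if_neg (by rwa [Cc_rmul])]
    ring
  case pos =>
    have hj := jc_ne_zero g hz
    have hJu : J (rmul u g) z ≠ 0 := J_ne_zero hu' hz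
    have hJv : J (rmul v g) z ≠ 0 := J_ne_zero hv' hz
    rw [term, term, if_pos hC, if_pos (by rwa [Cc_rmul]), Cc_rmul]
    have hr : J v (moeb g z) / J u (moeb g z) = J (rmul v g) z / J (rmul u g) z := by
      rw [J_cocycle v g hz, J_cocycle u g hz]
      field_simp
    rw [hr, J_cocycle u g hz, cpow_neg_int _ k, cpow_neg_int _ k, div_zpow,
      _root_.zpow_neg (jc g z) k, div_inv_eq_mul]
    ring

/-- right translation on cosets -/
def tE (g : SL2Z) : BCoset ≃ BCoset :=
  Quotient.congr (Equiv.mulRight g) (fun x y => by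
    rw [QuotientGroup.rightRel_apply, QuotientGroup.rightRel_apply]
    have h : (Equiv.mulRight g y) * (Equiv.mulRight g x)⁻¹ = y * x⁻¹ := by
      simp [Equiv.mulRight]
    rw [h])

lemma tE_mk (g γ : SL2Z) : tE g (Quotient.mk _ γ) = Quotient.mk _ (γ * g) := rfl

lemma bRow_tE (g : SL2Z) (p : BCoset) : bRow (tE g p) = rmul (bRow p) g := by
  conv_lhs => rw [← Quotient.out_eq p]
  rw [tE_mk, bRow_mk, row_mul]
  rfl

/-! ### Holomorphy pieces -/

lemma div_im_eq (a b : ℂ) : (a / b).im = (a * (starRingEnd ℂ) b).im / Complex.normSq b := by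
  rw [Complex.div_im, Complex.mul_im]
  simp only [Complex.conj_re, Complex.conj_im]
  ring

lemma J_differentiableAt (u : Fin 2 → ℤ) (z : ℂ) :
    DifferentiableAt ℂ (fun z' => J u z') z := by
  unfold J
  exact ((differentiable_id.const_mul _).add_const _).differentiableAt

lemma term_differentiableAt (k : ℤ) (s w : ℂ) {v u : Fin 2 → ℤ}
    (hu : u ≠ 0) {z : ℂ} (hz : 0 < z.im) :
    DifferentiableAt ℂ (fun z' => term k s w z' v u) z := by
  by_cases hC : 0 < Cc v u
  case neg =>
    have h : (fun z' => term k s w z' v u) = fun _ => (0:ℂ) := by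
      funext z'; rw [term, if_neg hC]
    rw [h]
    exact differentiableAt_const 0
  case pos =>
    have heq : (fun z' => term k s w z' v u) = fun z' =>
        ((Cc v u : ℂ)) ^ (w - 1) * (J v z' / J u z') ^ (-s) * (J u z') ^ (-k : ℤ) := by
      funext z'; rw [term, if_pos hC, cpow_neg_int]
    rw [heq]
    have hJu : J u z ≠ 0 := J_ne_zero hu hz
    have hdiv : DifferentiableAt ℂ (fun z' => J v z' / J u z') z :=
      (J_differentiableAt v z).div (J_differentiableAt u z) hJu
    have hslit : (J v z / J u z) ∈ Complex.slitPlane := by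
      rw [Complex.mem_slitPlane_iff]
      right
      rw [div_im_eq, mul_conj_im]
      have h1 : (0:ℝ) < (Cc v u : ℝ) := by exact_mod_cast hC
      have h2 : 0 < Complex.normSq (J u z) := Complex.normSq_pos.mpr hJu
      positivity
    have h1 : DifferentiableAt ℂ (fun z' => (J v z' / J u z') ^ (-s)) z :=
      hdiv.cpow (differentiableAt_const _) hslit
    have h2 : DifferentiableAt ℂ (fun z' => (J u z') ^ (-k : ℤ)) z :=
      (J_differentiableAt u z).zpow (Or.inl hJu)
    exact ((differentiableAt_const _).mul h1).mul h2

end DblAux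

open DblAux

/-- for `2 < Re s < k - 2`, `Re w < Re s - 1`, `Re w < k - 1 - Re s`, the function
`z ↦ 𝓔_{s,k-s}(z,w)` is a weight `k` cusp form for `SL₂(ℤ)`: it is holomorphic on `ℍ`,
transforms with automorphy factor `j(γ,z)^k`, and tends to `0` as `Im z → ∞`,
uniformly in `Re z`. -/
theorem dblEisenstein_cuspform (k : ℤ) (hk : Even k) (s w : ℂ)
    (hs1 : 2 < s.re) (hs2 : s.re < (k : ℝ) - 2)
    (hw1 : w.re < s.re - 1) (hw2 : w.re < (k : ℝ) - 1 - s.re) :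
    DifferentiableOn ℂ (dblE k s w) {z : ℂ | 0 < z.im} ∧
    (∀ g : SL2Z, ∀ z : ℂ, 0 < z.im → dblE k s w (moeb g z) = jc g z ^ k * dblE k s w z) ∧
    (∀ ε : ℝ, 0 < ε → ∃ Y : ℝ, ∀ z : ℂ, Y ≤ z.im → ‖dblE k s w z‖ < ε) := by
  classical
  have hσ2p : 2 < (k:ℝ) - s.re := by linarith
  set t : ℝ := max (w.re - 1) ((min s.re ((k:ℝ) - s.re) - 2)/2) with htdef
  have hmin : 2 < min s.re ((k:ℝ) - s.re) := lt_min hs1 hσ2p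
  have ht_pos : 0 < t :=
    lt_of_lt_of_le (by linarith : (0:ℝ) < (min s.re ((k:ℝ) - s.re) - 2)/2) (le_max_right _ _)
  have htw : w.re - 1 ≤ t := le_max_left _ _
  have hta1 : t < s.re - 2 := by
    apply max_lt
    · linarith
    · have h := min_le_left s.re ((k:ℝ) - s.re); linarith
  have hta2 : t < ((k:ℝ) - s.re) - 2 := by
    apply max_lt
    · linarith
    · have h := min_le_right s.re ((k:ℝ) - s.re); linarith
  set a1 : ℝ := t - s.re with ha1def
  set a2 : ℝ := t - ((k:ℝ) - s.re) with ha2def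
  have ha1 : a1 < -2 := by rw [ha1def]; linarith
  have ha2 : a2 < -2 := by rw [ha2def]; linarith
  set E : ℝ := Real.exp (Real.pi * |s.im|) with hEdef
  have hEpos : 0 < E := Real.exp_pos _
  -- pointwise bound
  have hbound : ∀ z : ℂ, 0 < z.im → ∀ p : BCoset × BCoset,
      ‖dblSummand k s w z p‖ ≤ E * z.im ^ (-t) *
        ‖J (bRow p.1) z‖ ^ a1 * ‖J (bRow p.2) z‖ ^ a2 := by
    intro z hz p
    rw [dblSummand_eq]
    exact term_bound k s w hz (bRow_ne_zero _) (bRow_ne_zero _) ht_pos.le htw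
  have habs_nonneg : ∀ (v : Fin 2 → ℤ) (z : ℂ) (a : ℝ), (0:ℝ) ≤ ‖J v z‖ ^ a :=
    fun v z a => Real.rpow_nonneg (norm_nonneg _) _
  -- summability
  have hsum1 : ∀ z : ℂ, 0 < z.im →
      Summable (fun p : BCoset => ‖J (bRow p) z‖ ^ a1) :=
    fun z hz => summable_J_row z hz ha1
  have hsum2 : ∀ z : ℂ, 0 < z.im →
      Summable (fun p : BCoset => ‖J (bRow p) z‖ ^ a2) :=
    fun z hz => summable_J_row z hz ha2
  have hsumprod : ∀ z : ℂ, 0 < z.im → Summable (fun p : BCoset × BCoset =>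
      (E * z.im ^ (-t)) * (‖J (bRow p.1) z‖ ^ a1 *
        ‖J (bRow p.2) z‖ ^ a2)) := by
    intro z hz
    exact (((hsum1 z hz).mul_of_nonneg (hsum2 z hz) (fun p => habs_nonneg _ _ _)
      (fun p => habs_nonneg _ _ _))).mul_left _
  have hsumd : ∀ z : ℂ, 0 < z.im →
      Summable (fun p : BCoset × BCoset => ‖dblSummand k s w z p‖) := by
    intro z hz
    refine Summable.of_nonneg_of_le (fun p => norm_nonneg _) (fun p => ?_) (hsumprod z hz)
    exact (hbound z hz p).trans (le_of_eq (by ring))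
  -- global bound by a product of two one-variable sums
  have hdblE_le : ∀ z : ℂ, 0 < z.im → ‖dblE k s w z‖ ≤ E * z.im ^ (-t) *
      (∑' p : BCoset, ‖J (bRow p) z‖ ^ a1) *
      (∑' p : BCoset, ‖J (bRow p) z‖ ^ a2) := by
    intro z hz
    have h1 : ‖dblE k s w z‖ ≤ ∑' p : BCoset × BCoset, ‖dblSummand k s w z p‖ :=
      norm_tsum_le_tsum_norm (hsumd z hz)
    have h2 : (∑' p : BCoset × BCoset, ‖dblSummand k s w z p‖) ≤
        ∑' p : BCoset × BCoset, (E * z.im ^ (-t)) * (‖J (bRow p.1) z‖ ^ a1 *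
          ‖J (bRow p.2) z‖ ^ a2) := by
      refine Summable.tsum_le_tsum (fun p => ?_) (hsumd z hz) (hsumprod z hz)
      exact (hbound z hz p).trans (le_of_eq (by ring))
    have h3 : (∑' p : BCoset × BCoset, (E * z.im ^ (-t)) *
        (‖J (bRow p.1) z‖ ^ a1 * ‖J (bRow p.2) z‖ ^ a2)) =
        E * z.im ^ (-t) * ((∑' p : BCoset, ‖J (bRow p) z‖ ^ a1) *
          (∑' p : BCoset, ‖J (bRow p) z‖ ^ a2)) := by
      rw [tsum_mul_left]
      congr 1
      rw [tsum_mul_tsum_of_summable_norm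
        (by simpa [Real.norm_of_nonneg (habs_nonneg _ _ _)] using hsum1 z hz)
        (by simpa [Real.norm_of_nonneg (habs_nonneg _ _ _)] using hsum2 z hz)]
    calc ‖dblE k s w z‖ ≤ _ := h1
      _ ≤ _ := h2
      _ = _ := h3
      _ = E * z.im ^ (-t) * (∑' p : BCoset, ‖J (bRow p) z‖ ^ a1) *
          (∑' p : BCoset, ‖J (bRow p) z‖ ^ a2) := by ring
  -- modularity
  have hmod : ∀ g : SL2Z, ∀ z : ℂ, 0 < z.im →
      dblE k s w (moeb g z) = jc g z ^ k * dblE k s w z := by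
    intro g z hz
    have e : (BCoset × BCoset) ≃ (BCoset × BCoset) := (tE g).prodCongr (tE g)
    calc dblE k s w (moeb g z)
        = ∑' p : BCoset × BCoset, term k s w (moeb g z) (bRow p.1) (bRow p.2) :=
          tsum_congr (fun p => dblSummand_eq k s w _ p)
      _ = ∑' p : BCoset × BCoset, jc g z ^ k *
            term k s w z (bRow (tE g p.1)) (bRow (tE g p.2)) := by
          refine tsum_congr (fun p => ?_)
          rw [bRow_tE, bRow_tE]
          refine term_transform k s w g hz ?_ ?_
          · rw [← bRow_tE]; exact bRow_ne_zero _
          · rw [← bRow_tE]; exact bRow_ne_zero _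
      _ = jc g z ^ k * ∑' p : BCoset × BCoset,
            term k s w z (bRow (tE g p.1)) (bRow (tE g p.2)) := tsum_mul_left
      _ = jc g z ^ k * ∑' p : BCoset × BCoset, term k s w z (bRow p.1) (bRow p.2) := by
          congr 1
          exact ((tE g).prodCongr (tE g)).tsum_eq
            (fun q : BCoset × BCoset => term k s w z (bRow q.1) (bRow q.2))
      _ = jc g z ^ k * dblE k s w z := by
          congr 1
          exact (tsum_congr (fun p => dblSummand_eq k s w z p)).symm
  refine ⟨?_, hmod, ?_⟩
  · -- holomorphy
    intro z₀ hz₀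
    have hz₀' : 0 < z₀.im := hz₀
    set A : ℝ := |z₀.re| + 1 with hAdef
    set B : ℝ := z₀.im / 2 with hBdef
    have hBpos : 0 < B := by rw [hBdef]; linarith
    set U : Set ℂ := {z : ℂ | |z.re| < A} ∩ {z : ℂ | B < z.im} with hUdef
    have hUopen : IsOpen U := by
      refine IsOpen.inter ?_ ?_
      · exact isOpen_lt (continuous_abs.comp Complex.continuous_re) continuous_const
      · exact isOpen_lt continuous_const Complex.continuous_im
    have hz₀U : z₀ ∈ U := by
      constructor
      · show |z₀.re| < A
        rw [hAdef]; linarith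
      · show B < z₀.im
        rw [hBdef]; linarith
    set r0 : ℝ := EisensteinSeries.r ⟨⟨A, B⟩, hBpos⟩ with hr0def
    have hr0pos : 0 < r0 := EisensteinSeries.r_pos _
    set uB : BCoset × BCoset → ℝ := fun p =>
      E * B ^ (-t) * (r0 ^ a1 * ‖bRow p.1‖ ^ a1) * (r0 ^ a2 * ‖bRow p.2‖ ^ a2) with huBdef
    have huB : Summable uB := by
      have h1 : Summable (fun p : BCoset => ‖bRow p‖ ^ a1) :=
        (summable_norm_rpow ha1).comp_injective bRow_injective
      have h2 : Summable (fun p : BCoset => ‖bRow p‖ ^ a2) :=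
        (summable_norm_rpow ha2).comp_injective bRow_injective
      have h3 := ((h1.mul_of_nonneg h2 (fun p => Real.rpow_nonneg (norm_nonneg _) _)
        (fun p => Real.rpow_nonneg (norm_nonneg _) _))).mul_left
        (E * B ^ (-t) * r0 ^ a1 * r0 ^ a2)
      refine h3.congr (fun p => ?_)
      rw [huBdef]; ring
    have hF_le : ∀ (p : BCoset × BCoset) (z : ℂ), z ∈ U → ‖dblSummand k s w z p‖ ≤ uB p := by
      intro p z hzU
      have hre : |z.re| < A := hzU.1
      have him : B < z.im := hzU.2
      have hzim : 0 < z.im := lt_trans hBpos him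
      refine (hbound z hzim p).trans ?_
      have hmem : (⟨z, hzim⟩ : UpperHalfPlane) ∈ UpperHalfPlane.verticalStrip A B :=
        ⟨le_of_lt hre, le_of_lt him⟩
      have hb1 : ‖J (bRow p.1) z‖ ^ a1 ≤ r0 ^ a1 * ‖bRow p.1‖ ^ a1 :=
        J_bound_strip hBpos hmem (by linarith) (bRow p.1)
      have hb2 : ‖J (bRow p.2) z‖ ^ a2 ≤ r0 ^ a2 * ‖bRow p.2‖ ^ a2 :=
        J_bound_strip hBpos hmem (by linarith) (bRow p.2)
      have hbim : z.im ^ (-t) ≤ B ^ (-t) :=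
        Real.rpow_le_rpow_of_nonpos hBpos (le_of_lt him) (by linarith)
      simp only [huBdef]
      have h01 : (0:ℝ) ≤ ‖J (bRow p.1) z‖ ^ a1 := habs_nonneg _ _ _
      have h02 : (0:ℝ) ≤ ‖J (bRow p.2) z‖ ^ a2 := habs_nonneg _ _ _
      exact mul_le_mul (mul_le_mul (mul_le_mul le_rfl hbim
        (Real.rpow_nonneg hzim.le _) hEpos.le) hb1 h01 (by positivity)) hb2 h02
        (by positivity)
    have hFdiff : ∀ p : BCoset × BCoset,
        DifferentiableOn ℂ (fun z => dblSummand k s w z p) U := by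
      intro p
      have hfe : (fun z => dblSummand k s w z p) =
          fun z => term k s w z (bRow p.1) (bRow p.2) :=
        funext (fun z => dblSummand_eq k s w z p)
      rw [hfe]
      intro z hzU
      have hzim : 0 < z.im := lt_trans hBpos hzU.2
      exact (term_differentiableAt k s w (bRow_ne_zero _) hzim).differentiableWithinAt
    have hdiffU : DifferentiableOn ℂ (fun z => ∑' p : BCoset × BCoset, dblSummand k s w z p) U :=
      differentiableOn_tsum_of_summable_norm huB hFdiff hUopen hF_le
    have : DifferentiableAt ℂ (dblE k s w) z₀ := by
      have h := (hdiffU z₀ hz₀U).differentiableAt (hUopen.mem_nhds hz₀U)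
      exact h
    exact this.differentiableWithinAt
  · -- decay
    -- translation invariance
    have htrans : ∀ z : ℂ, 0 < z.im → ∀ n : ℤ, dblE k s w (z + n) = dblE k s w z := by
      intro z hz n
      have hT := ModularGroup.coe_T_zpow n
      have h00 : ((ModularGroup.T ^ n : SL2Z).1 0 0 : ℤ) = 1 := by rw [hT]; simp
      have h01 : ((ModularGroup.T ^ n : SL2Z).1 0 1 : ℤ) = n := by rw [hT]; simp
      have h10 : ((ModularGroup.T ^ n : SL2Z).1 1 0 : ℤ) = 0 := by rw [hT]; simp
      have h11 : ((ModularGroup.T ^ n : SL2Z).1 1 1 : ℤ) = 1 := by rw [hT]; simp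
      have hjc : jc (ModularGroup.T ^ n) z = 1 := by rw [jc, h10, h11]; simp
      have hmo : moeb (ModularGroup.T ^ n) z = z + n := by
        rw [moeb, h00, h01, hjc]; simp
      have := hmod (ModularGroup.T ^ n) z hz
      rw [hmo, hjc] at this
      simpa using this
    intro ε hε
    -- the strip bound
    have hone : (0:ℝ) < 1 := one_pos
    set r0 : ℝ := EisensteinSeries.r ⟨⟨1/2, 1⟩, hone⟩ with hr0def
    have hr0pos : 0 < r0 := EisensteinSeries.r_pos _
    set K : ℝ := E * (r0 ^ a1 * Tn a1) * (r0 ^ a2 * Tn a2) with hKdef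
    have hKnonneg : 0 ≤ K := by
      have := Tn_nonneg a1
      have := Tn_nonneg a2
      positivity
    have hKb : ∀ z : ℂ, 1 ≤ z.im → ‖dblE k s w z‖ ≤ K * z.im ^ (-t) := by
      intro z him
      have hzim : 0 < z.im := lt_of_lt_of_le one_pos him
      -- reduce to the strip using translation invariance
      set n : ℤ := round z.re with hn
      set z' : ℂ := z - n with hz'def
      have hz'im : z'.im = z.im := by rw [hz'def]; simp
      have hz'im_pos : 0 < z'.im := by rw [hz'im]; exact hzim
      have hz'1 : (1:ℝ) ≤ z'.im := by rw [hz'im]; exact him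
      have hzz' : dblE k s w z = dblE k s w z' := by
        have h := htrans z' hz'im_pos n
        have hzz : z' + (n:ℂ) = z := by rw [hz'def]; ring
        rw [hzz] at h
        exact h
      have hre' : |z'.re| ≤ 1/2 := by
        have : z'.re = z.re - n := by rw [hz'def]; simp
        rw [this, hn]
        exact abs_sub_round z.re
      have hmem : (⟨z', hz'im_pos⟩ : UpperHalfPlane) ∈ UpperHalfPlane.verticalStrip (1/2) 1 :=
        ⟨hre', hz'1⟩
      have hS1 : (∑' p : BCoset, ‖J (bRow p) z'‖ ^ a1) ≤ r0 ^ a1 * Tn a1 :=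
        tsum_J_row_le z' hz'im_pos ha1
          (fun v => J_bound_strip hone hmem (by linarith) v)
      have hS2 : (∑' p : BCoset, ‖J (bRow p) z'‖ ^ a2) ≤ r0 ^ a2 * Tn a2 :=
        tsum_J_row_le z' hz'im_pos ha2
          (fun v => J_bound_strip hone hmem (by linarith) v)
      have hS1n : 0 ≤ ∑' p : BCoset, ‖J (bRow p) z'‖ ^ a1 :=
        tsum_nonneg (fun p => habs_nonneg _ _ _)
      have hS2n : 0 ≤ ∑' p : BCoset, ‖J (bRow p) z'‖ ^ a2 :=
        tsum_nonneg (fun p => habs_nonneg _ _ _)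
      calc ‖dblE k s w z‖ = ‖dblE k s w z'‖ := by rw [hzz']
        _ ≤ E * z'.im ^ (-t) * (∑' p : BCoset, ‖J (bRow p) z'‖ ^ a1) *
            (∑' p : BCoset, ‖J (bRow p) z'‖ ^ a2) := hdblE_le z' hz'im_pos
        _ ≤ E * z'.im ^ (-t) * (r0 ^ a1 * Tn a1) * (r0 ^ a2 * Tn a2) := by
            refine mul_le_mul (mul_le_mul le_rfl hS1 hS1n (by positivity)) hS2 hS2n
              (mul_nonneg (by positivity) (mul_nonneg (Real.rpow_nonneg hr0pos.le _)
                (Tn_nonneg a1)))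
        _ = K * z'.im ^ (-t) := by rw [hKdef]; ring
        _ = K * z.im ^ (-t) := by rw [hz'im]
    -- choose Y
    have htend : Filter.Tendsto (fun y : ℝ => K * y ^ (-t)) Filter.atTop (nhds 0) := by
      have h := (tendsto_rpow_neg_atTop ht_pos).const_mul K
      simpa using h
    have hev : ∀ᶠ y : ℝ in Filter.atTop, K * y ^ (-t) < ε := htend.eventually_lt_const hε
    obtain ⟨Y0, hY0⟩ := Filter.eventually_atTop.mp (hev.and (Filter.eventually_ge_atTop 1))
    refine ⟨Y0 + 1, fun z hz => ?_⟩
    have hY : Y0 ≤ z.im := by linarith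
    obtain ⟨hlt, hone'⟩ := hY0 z.im hY
    exact lt_of_le_of_lt (hKb z hone') hlt

end
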